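/- (Proposition 4 / §5.) Assume Δ = 0, γ ≠ 4, l ≠ −2 and m ≠ −2. Then (s₁ ∘ z₁)² = τ(−(2/(4−γ))·c₁) = τ(−2α/(4−γ), −2β/(4−γ)), (s₂ ∘ z₂)² = τ(−(2/(l+2))·c₂) = τ(4/(l+2), −2l/(l+2)), and (s₃ ∘ z₃)² = τ(−(2/(m+2))·c₃) = τ(−2m/(m+2), 4/(m+2)). -/

import Mathlib

noncomputable section

variable {K : Type*} [Field K] [CharZero K]

/-- The linear functional `x ↦ c 0 * x 0 + c 1 * x 1 + c 2 * x 2` on `K³`. -/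
def lf (c : Fin 3 → K) : (Fin 3 → K) →ₗ[K] K :=
  c 0 • LinearMap.proj 0 + c 1 • LinearMap.proj 1 + c 2 • LinearMap.proj 2

/-- `s₁ : x ↦ x − (2x₁ − α x₂ − β x₃)·a₁` where `a₁ = Pi.single 0 1`. -/
def s1 (α β : K) : Module.End K (Fin 3 → K) :=
  LinearMap.id - (lf ![2, -α, -β]).smulRight (Pi.single 0 1)

/-- `s₂ : x ↦ x − (−x₁ + 2x₂ − l·x₃)·a₂`. -/
def s2 (l : K) : Module.End K (Fin 3 → K) :=
  LinearMap.id - (lf ![-1, 2, -l]).smulRight (Pi.single 1 1)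

/-- `s₃ : x ↦ x − (−x₁ − m·x₂ + 2x₃)·a₃`. -/
def s3 (m : K) : Module.End K (Fin 3 → K) :=
  LinearMap.id - (lf ![-1, -m, 2]).smulRight (Pi.single 2 1)

/-- `b = b₁ = (4−γ)a₁ + (l+2)a₂ + (m+2)a₃`, with `γ = l·m`. -/
def bvec (l m : K) : Fin 3 → K := ![4 - l * m, l + 2, m + 2]

/-- `b₂ = (2α+βm)a₁ + (4−β)a₂ + (α+2m)a₃`. -/
def b2vec (α β l m : K) : Fin 3 → K := ![2*α + β*m, 4 - β, α + 2*m]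

/-- `b₃ = (2β+αl)a₁ + (β+2l)a₂ + (4−α)a₃`. -/
def b3vec (α β l m : K) : Fin 3 → K := ![2*β + α*l, β + 2*l, 4 - α]

/-- `τ(λ,μ) : a₁ ↦ a₁ + ω·b, a₂ ↦ a₂ + λ·b, a₃ ↦ a₃ + μ·b`,
where `ω = −(λ(l+2) + μ(m+2))/(4−γ)`. -/
def tau (l m lam mu : K) : Module.End K (Fin 3 → K) :=
  LinearMap.id +
    (lf ![-(lam*(l+2) + mu*(m+2))/(4 - l*m), lam, mu]).smulRight (bvec l m)

/-- `τ` applied to a vector `(λ,μ) ∈ K²`. -/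
def tauv (l m : K) (v : K × K) : Module.End K (Fin 3 → K) := tau l m v.1 v.2

def c1 (α β : K) : K × K := (α, β)
def c2 (l : K) : K × K := (-2, l)
def c3 (m : K) : K × K := (m, -2)

/-- `z₁ : a₁ ↦ −a₁ + (2/(4−γ))·b, a₂ ↦ −a₂, a₃ ↦ −a₃`. -/
def z1 (l m : K) : Module.End K (Fin 3 → K) :=
  -LinearMap.id + (lf ![2/(4 - l*m), 0, 0]).smulRight (bvec l m)

/-- `z₂ : a₂ ↦ −a₂ + (2/(l+2))·b, a₁ ↦ −a₁, a₃ ↦ −a₃`. -/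
def z2 (l m : K) : Module.End K (Fin 3 → K) :=
  -LinearMap.id + (lf ![0, 2/(l+2), 0]).smulRight (bvec l m)

/-- `z₃ : a₃ ↦ −a₃ + (2/(m+2))·b, a₁ ↦ −a₁, a₂ ↦ −a₂`. -/
def z3 (l m : K) : Module.End K (Fin 3 → K) :=
  -LinearMap.id + (lf ![0, 0, 2/(m+2)]).smulRight (bvec l m)

/-- The linear functional `(λ,μ) ↦ c.1·λ + c.2·μ` on `K²`. -/
def lf2 (c : K × K) : (K × K) →ₗ[K] K := c.1 • LinearMap.fst K K K + c.2 • LinearMap.snd K K K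

/-- `σ₁(λ,μ) = (λ,μ) − ((λ(l+2)+μ(m+2))/(4−γ))·(α,β)`. -/
def sigma1 (α β l m : K) : Module.End K (K × K) :=
  LinearMap.id - (lf2 ((l+2)/(4 - l*m), (m+2)/(4 - l*m))).smulRight (α, β)

/-- `σ₂(λ,μ) = (λ,μ) + λ·(−2,l)`. -/
def sigma2 (l : K) : Module.End K (K × K) :=
  LinearMap.id + (LinearMap.fst K K K).smulRight ((-2 : K), l)

/-- `σ₃(λ,μ) = (λ,μ) + μ·(m,−2)`. -/
def sigma3 (m : K) : Module.End K (K × K) :=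
  LinearMap.id + (LinearMap.snd K K K).smulRight (m, (-2 : K))

/-- The sequence `u_x` : `u_x(0)=0, u_x(1)=u_x(2)=1, u_x(3)=x−1,
u_x(n+4) = (x−2)·u_x(n+2) − u_x(n)`. -/
def useq (x : K) : ℕ → K
  | 0 => 0
  | 1 => 1
  | 2 => 1
  | 3 => x - 1
  | (n+4) => (x - 2) * useq x (n+2) - useq x n



set_option maxHeartbeats 1600000 in
lemma single0' : (Pi.single 0 1 : Fin 3 → K) = ![1,0,0] := by
  ext i; fin_cases i <;> simp

set_option maxHeartbeats 1600000 in
lemma single1' : (Pi.single 1 1 : Fin 3 → K) = ![0,1,0] := by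
  ext i; fin_cases i <;> simp

set_option maxHeartbeats 1600000 in
lemma single2' : (Pi.single 2 1 : Fin 3 → K) = ![0,0,1] := by
  ext i; fin_cases i <;> simp

lemma tau_eq (l m lam mu w : K) (h4 : 4 - l*m ≠ 0)
    (hw : w * (4 - l*m) = -(lam*(l+2) + mu*(m+2))) :
    tau l m lam mu = LinearMap.id + (lf ![w, lam, mu]).smulRight (bvec l m) := by
  have h : -(lam*(l+2) + mu*(m+2))/(4 - l*m) = w := by
    rw [← hw, mul_div_assoc, div_self h4, mul_one]
  rw [tau, h]

set_option maxHeartbeats 1600000 in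
lemma key1 (α β l m : K)
    (hΔ : 8 - 2*α - 2*β - 2*(l*m) - (α*l + β*m) = 0) (hγ : l*m ≠ 4) :
    (s1 α β * z1 l m)^2 = tau l m (-2*α/(4 - l*m)) (-2*β/(4 - l*m)) := by
  have h4 : (4 : K) - l*m ≠ 0 := sub_ne_zero.mpr (Ne.symm hγ)
  rw [tau_eq l m _ _ (4/(4 - l*m)) h4 (by field_simp; linear_combination 2*hΔ)]
  refine LinearMap.ext fun x => funext fun i => ?_
  simp only [pow_two, Module.End.mul_apply, s1, z1, lf, bvec, single0', LinearMap.add_apply,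
      LinearMap.sub_apply, LinearMap.neg_apply, LinearMap.id_apply, LinearMap.smulRight_apply,
      LinearMap.smul_apply, LinearMap.proj_apply, Pi.add_apply, Pi.sub_apply, Pi.neg_apply,
      Pi.smul_apply, smul_eq_mul, Matrix.cons_val_zero, Matrix.cons_val_one, Matrix.head_cons,
      Matrix.cons_val_two, Matrix.tail_cons, Function.eval]
  fin_cases i
  · simp only [Matrix.cons_val_zero, Matrix.cons_val_one, Matrix.head_cons, Matrix.cons_val_two,
      Matrix.tail_cons, Fin.zero_eta, Fin.mk_one, Fin.isValue, mul_zero, mul_one, sub_zero,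
      add_zero, zero_add, zero_mul]
    field_simp
    first
    | linear_combination (-2*α*l*m*(x 1) - 4*α*l*(x 0) - 8*α*(x 0) + 8*α*(x 1)
        - 2*β*l*m*(x 2) - 4*β*m*(x 0) - 8*β*(x 0) + 8*β*(x 2) + 2*l*m*(x 0) - 8*(x 0)) * hΔ
    | linear_combination ((-2*α*l*m*(x 1) - 4*α*l*(x 0) - 8*α*(x 0) + 8*α*(x 1)
        - 2*β*l*m*(x 2) - 4*β*m*(x 0) - 8*β*(x 0) + 8*β*(x 2) + 2*l*m*(x 0) - 8*(x 0))*(4-l*m)) * hΔ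
    | linear_combination ((-2*α*l*m*(x 1) - 4*α*l*(x 0) - 8*α*(x 0) + 8*α*(x 1)
        - 2*β*l*m*(x 2) - 4*β*m*(x 0) - 8*β*(x 0) + 8*β*(x 2) + 2*l*m*(x 0) - 8*(x 0))*(4-l*m)^2) * hΔ
    | linear_combination (-(-2*α*l*m*(x 1) - 4*α*l*(x 0) - 8*α*(x 0) + 8*α*(x 1)
        - 2*β*l*m*(x 2) - 4*β*m*(x 0) - 8*β*(x 0) + 8*β*(x 2) + 2*l*m*(x 0) - 8*(x 0))) * hΔ
    | linear_combination (-(-2*α*l*m*(x 1) - 4*α*l*(x 0) - 8*α*(x 0) + 8*α*(x 1)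
        - 2*β*l*m*(x 2) - 4*β*m*(x 0) - 8*β*(x 0) + 8*β*(x 2) + 2*l*m*(x 0) - 8*(x 0))*(4-l*m)) * hΔ
    | linear_combination (-(-2*α*l*m*(x 1) - 4*α*l*(x 0) - 8*α*(x 0) + 8*α*(x 1)
        - 2*β*l*m*(x 2) - 4*β*m*(x 0) - 8*β*(x 0) + 8*β*(x 2) + 2*l*m*(x 0) - 8*(x 0))*(4-l*m)^2) * hΔ
  · simp only [Matrix.cons_val_zero, Matrix.cons_val_one, Matrix.head_cons, Matrix.cons_val_two,
      Matrix.tail_cons, Fin.zero_eta, Fin.mk_one, Fin.isValue, mul_zero, mul_one, sub_zero,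
      add_zero, zero_add, zero_mul]
    field_simp
    first
    | linear_combination (-4*(x 0)*(l+2)) * hΔ
    | linear_combination (-4*(x 0)*(l+2)*(4-l*m)) * hΔ
    | linear_combination (-4*(x 0)*(l+2)*(4-l*m)^2) * hΔ
    | linear_combination (4*(x 0)*(l+2)) * hΔ
    | linear_combination (4*(x 0)*(l+2)*(4-l*m)) * hΔ
    | linear_combination (4*(x 0)*(l+2)*(4-l*m)^2) * hΔ
  · simp only [Matrix.cons_val_zero, Matrix.cons_val_one, Matrix.head_cons, Matrix.cons_val_two,
      Matrix.tail_cons, Fin.zero_eta, Fin.mk_one, Fin.isValue, Fin.reduceFinMk, mul_zero, mul_one, sub_zero,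
      add_zero, zero_add, zero_mul]
    field_simp
    first
    | linear_combination (-4*(x 0)*(m+2)) * hΔ
    | linear_combination (-4*(x 0)*(m+2)*(4-l*m)) * hΔ
    | linear_combination (-4*(x 0)*(m+2)*(4-l*m)^2) * hΔ
    | linear_combination (4*(x 0)*(m+2)) * hΔ
    | linear_combination (4*(x 0)*(m+2)*(4-l*m)) * hΔ
    | linear_combination (4*(x 0)*(m+2)*(4-l*m)^2) * hΔ

set_option maxHeartbeats 1600000 in
lemma key2 (l m : K) (hγ : l*m ≠ 4) (hl : l ≠ -2) :
    (s2 l * z2 l m)^2 = tau l m (4/(l+2)) (-2*l/(l+2)) := by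
  have h4 : (4 : K) - l*m ≠ 0 := sub_ne_zero.mpr (Ne.symm hγ)
  have hl2 : l + 2 ≠ 0 := fun h => hl (by linear_combination h)
  refine LinearMap.ext fun x => funext fun i => ?_
  simp only [pow_two, Module.End.mul_apply, s2, z2, tau, lf, bvec, single1', LinearMap.add_apply,
      LinearMap.sub_apply, LinearMap.neg_apply, LinearMap.id_apply, LinearMap.smulRight_apply,
      LinearMap.smul_apply, LinearMap.proj_apply, Pi.add_apply, Pi.sub_apply, Pi.neg_apply,
      Pi.smul_apply, smul_eq_mul, Matrix.cons_val_zero, Matrix.cons_val_one, Matrix.head_cons,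
      Matrix.cons_val_two, Matrix.tail_cons, Function.eval]
  fin_cases i <;>
  · simp only [Matrix.cons_val_zero, Matrix.cons_val_one, Matrix.head_cons, Matrix.cons_val_two,
      Matrix.tail_cons, Fin.zero_eta, Fin.mk_one, Fin.isValue, mul_zero, mul_one, sub_zero,
      add_zero, zero_add, zero_mul]
    field_simp
    ring

set_option maxHeartbeats 1600000 in
lemma key3 (l m : K) (hγ : l*m ≠ 4) (hm : m ≠ -2) :
    (s3 m * z3 l m)^2 = tau l m (-2*m/(m+2)) (4/(m+2)) := by
  have h4 : (4 : K) - l*m ≠ 0 := sub_ne_zero.mpr (Ne.symm hγ)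
  have hm2 : m + 2 ≠ 0 := fun h => hm (by linear_combination h)
  have h4' : (4 : K) - m*l ≠ 0 := by rwa [mul_comm]
  refine LinearMap.ext fun x => funext fun i => ?_
  simp only [pow_two, Module.End.mul_apply, s3, z3, tau, lf, bvec, single2', LinearMap.add_apply,
      LinearMap.sub_apply, LinearMap.neg_apply, LinearMap.id_apply, LinearMap.smulRight_apply,
      LinearMap.smul_apply, LinearMap.proj_apply, Pi.add_apply, Pi.sub_apply, Pi.neg_apply,
      Pi.smul_apply, smul_eq_mul, Matrix.cons_val_zero, Matrix.cons_val_one, Matrix.head_cons,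
      Matrix.cons_val_two, Matrix.tail_cons, Function.eval]
  fin_cases i <;>
  · simp only [Matrix.cons_val_zero, Matrix.cons_val_one, Matrix.head_cons, Matrix.cons_val_two,
      Matrix.tail_cons, Fin.zero_eta, Fin.mk_one, Fin.isValue, Fin.reduceFinMk, mul_zero, mul_one, sub_zero,
      add_zero, zero_add, zero_mul]
    field_simp
    ring

/-- Proposition 4 / §5: with `Δ = 0`, `γ ≠ 4`, `l ≠ −2`, `m ≠ −2`:
`(s₁z₁)² = τ(−(2/(4−γ))c₁) = τ(−2α/(4−γ), −2β/(4−γ))`,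
`(s₂z₂)² = τ(−(2/(l+2))c₂) = τ(4/(l+2), −2l/(l+2))`,
`(s₃z₃)² = τ(−(2/(m+2))c₃) = τ(−2m/(m+2), 4/(m+2))`. -/
theorem stmt14 (α β l m : K)
    (hΔ : 8 - 2*α - 2*β - 2*(l*m) - (α*l + β*m) = 0) (hγ : l*m ≠ 4)
    (hl : l ≠ -2) (hm : m ≠ -2) :
    (s1 α β * z1 l m)^2 = tauv l m ((-(2/(4 - l*m))) • c1 α β) ∧
    (s1 α β * z1 l m)^2 = tau l m (-2*α/(4 - l*m)) (-2*β/(4 - l*m)) ∧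
    (s2 l * z2 l m)^2 = tauv l m ((-(2/(l+2))) • c2 l) ∧
    (s2 l * z2 l m)^2 = tau l m (4/(l+2)) (-2*l/(l+2)) ∧
    (s3 m * z3 l m)^2 = tauv l m ((-(2/(m+2))) • c3 m) ∧
    (s3 m * z3 l m)^2 = tau l m (-2*m/(m+2)) (4/(m+2)) := by
  have e1 : tauv l m ((-(2/(4 - l*m))) • c1 α β) = tau l m (-2*α/(4 - l*m)) (-2*β/(4 - l*m)) := by
    show tau l m _ _ = _
    simp only [c1, Prod.smul_mk, smul_eq_mul]
    congr 1 <;> ring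
  have e2 : tauv l m ((-(2/(l+2))) • c2 l) = tau l m (4/(l+2)) (-2*l/(l+2)) := by
    show tau l m _ _ = _
    simp only [c2, Prod.smul_mk, smul_eq_mul]
    congr 1 <;> ring
  have e3 : tauv l m ((-(2/(m+2))) • c3 m) = tau l m (-2*m/(m+2)) (4/(m+2)) := by
    show tau l m _ _ = _
    simp only [c3, Prod.smul_mk, smul_eq_mul]
    congr 1 <;> ring
  refine ⟨?_, key1 α β l m hΔ hγ, ?_, key2 l m hγ hl, ?_, key3 l m hγ hm⟩
  · rw [e1]; exact key1 α β l m hΔ hγ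
  · rw [e2]; exact key2 l m hγ hl
  · rw [e3]; exact key3 l m hγ hm


end
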